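/- The Lie algebra su(m) ⊂ so(2m) (viewed as real skew-symmetric matrices via the standard identification ℂ^m ≅ ℝ^{2m}) contains no nonzero element of real rank two. -/

import Mathlib

open scoped Matrix
/-- The Lie algebra `su(m) ⊂ so(2m)` contains no nonzero element of
real rank two: if `A` is a traceless skew-Hermitian complex `m × m` matrix, viewed (via
`ℂ^m ≅ ℝ^{2m}`) as a real-linear endomorphism of `ℂ^m`, and this endomorphism has real
rank two, then `A = 0`.  Equivalently, every nonzero element of `su(m)` has real rank
different from two. -/
theorem stmt1 (m : ℕ) (A : Matrix (Fin m) (Fin m) ℂ)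
    (hskew : Aᴴ = -A) (htrace : A.trace = 0) (hA : A ≠ 0) :
    Module.finrank ℝ
      (LinearMap.range ((Matrix.toLin' A).restrictScalars ℝ)) ≠ 2 := by
  intro h2
  -- the range of the restricted map is the restriction of scalars of the range
  set S : Submodule ℂ (Fin m → ℂ) := LinearMap.range (Matrix.toLin' A) with hS
  have hrange : LinearMap.range ((Matrix.toLin' A).restrictScalars ℝ)
      = S.restrictScalars ℝ := by
    ext x
    simp [hS, LinearMap.mem_range]
  rw [hrange] at h2
  have hfin : Module.finrank ℝ (S.restrictScalars ℝ) = Module.finrank ℝ S :=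
    ((Submodule.restrictScalarsEquiv ℝ ℂ _ S).restrictScalars ℝ).finrank_eq
  have htower : Module.finrank ℝ ℂ * Module.finrank ℂ S = Module.finrank ℝ S :=
    Module.finrank_mul_finrank ℝ ℂ S
  rw [Complex.finrank_real_complex] at htower
  have hdim : Module.finrank ℂ S = 1 := by omega
  -- find a nonzero entry of A
  obtain ⟨i0, j0, hij⟩ : ∃ i j, A i j ≠ 0 := by
    by_contra hc
    push_neg at hc
    exact hA (by ext i j; simp [hc])
  -- the j0-th column is a nonzero element of S
  have hcolmem : ∀ j, (fun i => A i j) ∈ S := by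
    intro j
    exact ⟨Pi.single j 1, by simp [Matrix.toLin'_apply]; rfl⟩
  set v : S := ⟨fun i => A i j0, hcolmem j0⟩ with hv
  have hvne : v ≠ 0 := by
    intro hc
    apply hij
    have := congrArg (fun w : S => (w : Fin m → ℂ) i0) hc
    simpa [hv] using this
  -- every column is a multiple of v, so A i j = c j * A i j0
  have hcol : ∀ j : Fin m, ∃ c : ℂ, ∀ i, A i j = c * A i j0 := by
    intro j
    obtain ⟨c, hc⟩ := exists_smul_eq_of_finrank_eq_one hdim hvne ⟨fun i => A i j, hcolmem j⟩
    refine ⟨c, fun i => ?_⟩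
    have := congrArg (fun w : S => (w : Fin m → ℂ) i) hc
    simpa [hv, mul_comm] using this.symm
  choose c hc using hcol
  -- entrywise skew-hermitian condition
  have hskew' : ∀ i j, (starRingEnd ℂ) (A j i) = - A i j := fun i j => by
    have := congrFun (congrFun hskew i) j
    simpa [Matrix.conjTranspose_apply] using this
  -- trace condition
  have htr : ∑ k, c k * A k j0 = 0 := by
    have : ∑ k, A k k = 0 := htrace
    rw [← this]
    exact Finset.sum_congr rfl fun k _ => (hc k k).symm
  -- key computation: the squared norm of column j0 vanishes
  have key : ∑ k, (starRingEnd ℂ) (A k j0) * A k j0 = 0 := by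
    have : ∀ k, (starRingEnd ℂ) (A k j0) * A k j0
        = -(A j0 j0) * (c k * A k j0) := by
      intro k
      rw [hskew' j0 k, hc k j0]
      ring
    rw [Finset.sum_congr rfl fun k _ => this k, ← Finset.mul_sum, htr, mul_zero]
  -- but the squared norm is positive
  have hterms : ∀ k, (starRingEnd ℂ) (A k j0) * A k j0 = (Complex.normSq (A k j0) : ℂ) := by
    intro k
    rw [mul_comm, Complex.mul_conj]
  rw [Finset.sum_congr rfl fun k _ => hterms k] at key
  have key' : ∑ k, Complex.normSq (A k j0) = 0 := by
    exact_mod_cast key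
  have hzero : Complex.normSq (A i0 j0) = 0 := by
    have := Finset.sum_eq_zero_iff_of_nonneg
      (fun k _ => Complex.normSq_nonneg (A k j0)) |>.mp key' i0 (Finset.mem_univ i0)
    exact this
  exact hij (Complex.normSq_eq_zero.mp hzero)
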